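/- arXiv:2002.10197 — 2 statements merged into one kernel-verified Lean document; each statement's English description precedes it below -/
import Mathlib

section
/- Let H be a finite-dimensional complex inner product space, let P_E and P_O be orthogonal projections on H with P_E + P_O = 1, and let Δ be a self-adjoint operator on H. Write Δ_E := P_E Δ P_E and Δ_O := P_O Δ P_O. Then the maximum of Tr[Π Δ] over all operators Π with 0 ≤ Π ≤ 1 satisfying the block-diagonality constraint Π = P_E Π P_E + P_O Π P_O equals ½(‖Δ_E + Δ_O‖₁ + Tr Δ), where ‖Y‖₁ = Tr √(Y† Y). Moreover, the maximum is attained by an orthogonal projection commuting with P_E. -/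
open Matrix
open scoped ComplexOrder Kronecker

/-- The trace norm `‖Y‖₁ = Tr √(Yᴴ Y)` of a complex matrix. -/
noncomputable def traceNorm {m : Type*} [Fintype m] [DecidableEq m]
    (Y : Matrix m m ℂ) : ℝ :=
  ((Matrix.posSemidef_conjTranspose_mul_self Y).1.eigenvectorUnitary.1 *
    diagonal (((↑) : ℝ → ℂ) ∘ (√·) ∘ (Matrix.posSemidef_conjTranspose_mul_self Y).1.eigenvalues) *
    (star (Matrix.posSemidef_conjTranspose_mul_self Y).1.eigenvectorUnitary :
      Matrix m m ℂ)).trace.re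

/-- The inner product `⟪x, y⟫ = ∑ i, conj (x i) * y i` on `m → ℂ`. -/
noncomputable def cinner {m : Type*} [Fintype m] (x y : m → ℂ) : ℂ := star x ⬝ᵥ y

/-- An orthogonal projection: a self-adjoint idempotent matrix. -/
def IsOrthoProj {m : Type*} [Fintype m] (P : Matrix m m ℂ) : Prop :=
  P.IsHermitian ∧ P * P = P

/-- An effect: an operator `S` with `0 ≤ S ≤ 1`. -/
def IsEffect {m : Type*} [Fintype m] [DecidableEq m] (S : Matrix m m ℂ) : Prop :=
  S.PosSemidef ∧ (1 - S).PosSemidef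

/-- The rank-one operator `|ψ⟩⟨ψ|`. -/
noncomputable def outer {m : Type*} (ψ : m → ℂ) : Matrix m m ℂ :=
  Matrix.vecMulVec ψ (star ψ)

/-- A matrix commuting with `diagonal c` also commutes with `diagonal f` whenever
`f` factors through `c`. -/
lemma comm_diagonal_fun {n : ℕ} (M : Matrix (Fin n) (Fin n) ℂ) (c f : Fin n → ℂ)
    (hf : ∀ i j, c i = c j → f i = f j)
    (h : M * diagonal c = diagonal c * M) : M * diagonal f = diagonal f * M := by
  ext i j
  have h' : M i j * c j = c i * M i j := by
    have := congrFun (congrFun h i) j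
    simpa [mul_diagonal, diagonal_mul] using this
  rw [mul_diagonal, diagonal_mul]
  rcases eq_or_ne (c i) (c j) with hc | hc
  · rw [hf i j hc, mul_comm]
  · have hz : M i j = 0 := by
      by_contra hnz
      exact hc (mul_left_cancel₀ hnz (by rw [h', mul_comm])).symm
    simp [hz]

/-- **Constrained Helstrom optimization.** The maximum of `Tr[Π Δ]` over block-diagonal
effects equals `(‖Δ_E + Δ_O‖₁ + Tr Δ)/2`, and it is attained by an orthogonal projection
commuting with `P_E`. -/
theorem blockDiagonal_helstrom_bound
    {n : ℕ} (P_E P_O : Matrix (Fin n) (Fin n) ℂ)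
    (hPE : IsOrthoProj P_E) (hPO : IsOrthoProj P_O) (hsum : P_E + P_O = 1)
    (Δ : Matrix (Fin n) (Fin n) ℂ) (hΔ : Δ.IsHermitian) :
    IsGreatest {x : ℝ | ∃ T : Matrix (Fin n) (Fin n) ℂ, IsEffect T ∧
        T = P_E * T * P_E + P_O * T * P_O ∧ x = ((T * Δ).trace).re}
      ((traceNorm (P_E * Δ * P_E + P_O * Δ * P_O) + Δ.trace.re) / 2) ∧
    ∃ T : Matrix (Fin n) (Fin n) ℂ, IsOrthoProj T ∧ T * P_E = P_E * T ∧
      T = P_E * T * P_E + P_O * T * P_O ∧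
      ((T * Δ).trace).re = (traceNorm (P_E * Δ * P_E + P_O * Δ * P_O) + Δ.trace.re) / 2 := by
  classical
  obtain ⟨hPEh, hPEi⟩ := hPE
  obtain ⟨hPOh, hPOi⟩ := hPO
  have hPOeq : P_O = 1 - P_E := eq_sub_of_add_eq' hsum
  have hEO : P_E * P_O = 0 := by rw [hPOeq, Matrix.mul_sub, Matrix.mul_one, hPEi, sub_self]
  have hOE : P_O * P_E = 0 := by rw [hPOeq, Matrix.sub_mul, Matrix.one_mul, hPEi, sub_self]
  set D := P_E * Δ * P_E + P_O * Δ * P_O with hDdef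
  have hD : D.IsHermitian := by
    show Dᴴ = D
    simp [hDdef, Matrix.conjTranspose_add, Matrix.conjTranspose_mul, hPEh.eq, hPOh.eq, hΔ.eq,
      Matrix.mul_assoc]
  set V : Matrix (Fin n) (Fin n) ℂ := ↑hD.eigenvectorUnitary with hVdef
  set d : Fin n → ℝ := hD.eigenvalues with hddef
  set c : Fin n → ℂ := fun i => (d i : ℂ) with hcdef
  have hV1 : Vᴴ * V = 1 := by
    simpa [Matrix.star_eq_conjTranspose] using
      (Matrix.mem_unitaryGroup_iff'.mp hD.eigenvectorUnitary.2)
  have hV2 : V * Vᴴ = 1 := by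
    simpa [Matrix.star_eq_conjTranspose] using
      (Matrix.mem_unitaryGroup_iff.mp hD.eigenvectorUnitary.2)
  have hspec : D = V * diagonal c * Vᴴ := by
    conv_lhs => rw [hD.spectral_theorem]
    rfl
  -- generic conjugation facts
  have htraceConj : ∀ g : Fin n → ℂ, (V * diagonal g * Vᴴ).trace = ∑ i, g i := by
    intro g
    rw [Matrix.trace_mul_cycle, hV1, Matrix.one_mul, Matrix.trace_diagonal]
  have hmulConj : ∀ g h : Fin n → ℂ,
      (V * diagonal g * Vᴴ) * (V * diagonal h * Vᴴ) = V * diagonal (g * h) * Vᴴ := by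
    intro g h
    calc (V * diagonal g * Vᴴ) * (V * diagonal h * Vᴴ)
        = V * diagonal g * (Vᴴ * V) * diagonal h * Vᴴ := by simp only [Matrix.mul_assoc]
      _ = V * (diagonal g * diagonal h) * Vᴴ := by
          rw [hV1, Matrix.mul_one, Matrix.mul_assoc V]
      _ = V * diagonal (g * h) * Vᴴ := by rw [diagonal_mul_diagonal]; rfl
  have hconjT : ∀ g : Fin n → ℂ,
      (V * diagonal g * Vᴴ)ᴴ = V * diagonal (star g) * Vᴴ := by
    intro g
    simp [Matrix.conjTranspose_mul, Matrix.diagonal_conjTranspose, Matrix.mul_assoc]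
  have trMdiag : ∀ (M : Matrix (Fin n) (Fin n) ℂ) (f : Fin n → ℂ),
      (M * diagonal f).trace = ∑ i, M i i * f i := by
    intro M f
    simp [Matrix.trace, Matrix.diag, Matrix.mul_diagonal]
  -- cyclic trace helper
  have cyc : ∀ (A X B : Matrix (Fin n) (Fin n) ℂ), (A * X * A * B).trace = (X * (A * B * A)).trace := by
    intro A X B
    simp only [Matrix.mul_assoc]
    rw [Matrix.trace_mul_comm A]
    simp only [Matrix.mul_assoc]
  -- (1) trace identity for block-diagonal T
  have htr : ∀ T : Matrix (Fin n) (Fin n) ℂ,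
      T = P_E * T * P_E + P_O * T * P_O → (T * Δ).trace = (T * D).trace := by
    intro T hT
    conv_lhs => rw [hT]
    rw [hDdef, Matrix.add_mul, Matrix.mul_add, Matrix.trace_add, Matrix.trace_add,
      cyc P_E T Δ, cyc P_O T Δ]
  -- (2) traces
  have hDtr : D.trace = Δ.trace := by
    rw [hDdef, Matrix.trace_add, Matrix.trace_mul_cycle P_E Δ P_E,
      Matrix.trace_mul_cycle P_O Δ P_O, hPEi, hPOi,
      ← Matrix.trace_add, ← Matrix.add_mul, hsum, Matrix.one_mul]
  have hDtr2 : D.trace = ∑ i, c i := by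
    conv_lhs => rw [hspec]
    exact htraceConj c
  have hΔtr : Δ.trace.re = ∑ i, d i := by
    rw [← hDtr, hDtr2, hcdef, ← Complex.ofReal_sum, Complex.ofReal_re]
  -- (3) trace norm
  have htn : traceNorm D = ∑ i, |d i| := by
    have e1 : traceNorm D = (cfc Real.sqrt (Dᴴ * D)).trace.re := by
      rw [(Matrix.posSemidef_conjTranspose_mul_self D).1.cfc_eq, IsHermitian.cfc]
      rfl
    have e2 : Dᴴ * D = cfc (fun x : ℝ => x ^ 2) D := by
      rw [cfc_pow_id D 2 hD.isSelfAdjoint, hD.eq, pow_two]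
    have e3 : cfc (fun x : ℝ => |x|) D = V * diagonal (fun i => ((|d i| : ℝ) : ℂ)) * Vᴴ := by
      rw [hD.cfc_eq, IsHermitian.cfc]
      rfl
    rw [e1, e2, ← cfc_comp Real.sqrt (fun x : ℝ => x ^ 2) D hD.isSelfAdjoint,
      show (Real.sqrt ∘ fun x : ℝ => x ^ 2) = fun x => |x| from funext fun x => Real.sqrt_sq_eq_abs x,
      e3, htraceConj, ← Complex.ofReal_sum, Complex.ofReal_re]
  -- (4) the optimal value
  have hval : (traceNorm D + Δ.trace.re) / 2 = ∑ i, max (d i) 0 := by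
    rw [htn, hΔtr, ← Finset.sum_add_distrib, Finset.sum_div]
    refine Finset.sum_congr rfl fun i _ => ?_
    rcases le_total 0 (d i) with h | h
    · rw [abs_of_nonneg h, max_eq_left h]; ring
    · rw [abs_of_nonpos h, max_eq_right h]; ring
  -- (5) upper bound
  have hub : ∀ x ∈ {x : ℝ | ∃ T : Matrix (Fin n) (Fin n) ℂ, IsEffect T ∧
      T = P_E * T * P_E + P_O * T * P_O ∧ x = ((T * Δ).trace).re},
      x ≤ (traceNorm D + Δ.trace.re) / 2 := by
    rintro x ⟨T, ⟨hTpsd, hT1psd⟩, hTbd, rfl⟩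
    rw [htr T hTbd, hval]
    have e1 : (T * D).trace = ((Vᴴ * T * V) * diagonal c).trace := by
      conv_lhs => rw [hspec]
      calc (T * (V * diagonal c * Vᴴ)).trace
          = ((T * V * diagonal c) * Vᴴ).trace := by simp only [Matrix.mul_assoc]
        _ = (Vᴴ * (T * V * diagonal c)).trace := by rw [Matrix.trace_mul_comm]
        _ = ((Vᴴ * T * V) * diagonal c).trace := by simp only [Matrix.mul_assoc]
    rw [e1, trMdiag]
    have hre : (∑ i, (Vᴴ * T * V) i i * c i).re = ∑ i, ((Vᴴ * T * V) i i).re * d i := by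
      rw [Complex.re_sum]
      refine Finset.sum_congr rfl fun i _ => ?_
      simp [hcdef, Complex.mul_re]
    rw [hre]
    refine Finset.sum_le_sum fun i _ => ?_
    have hSpsd : (Vᴴ * T * V).PosSemidef := hTpsd.conjTranspose_mul_mul_same V
    have hS1psd : (1 - Vᴴ * T * V).PosSemidef := by
      have := hT1psd.conjTranspose_mul_mul_same V
      simpa [Matrix.mul_sub, Matrix.sub_mul, Matrix.mul_one, hV1] using this
    have hdiag : ∀ (M : Matrix (Fin n) (Fin n) ℂ), M.PosSemidef → ∀ j, 0 ≤ (M j j).re := by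
      intro M hM j
      have := hM.re_dotProduct_nonneg (Pi.single j 1)
      simpa [dotProduct, Pi.single_apply, mulVec] using this
    have h0 : 0 ≤ ((Vᴴ * T * V) i i).re := hdiag _ hSpsd i
    have h1 : ((Vᴴ * T * V) i i).re ≤ 1 := by
      have := hdiag _ hS1psd i
      simp only [Matrix.sub_apply, Matrix.one_apply_eq, Complex.sub_re, Complex.one_re] at this
      linarith
    rcases le_total 0 (d i) with h | h
    · calc ((Vᴴ * T * V) i i).re * d i ≤ 1 * d i := by
            exact mul_le_mul_of_nonneg_right h1 h
        _ = d i := one_mul _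
        _ ≤ max (d i) 0 := le_max_left _ _
    · calc ((Vᴴ * T * V) i i).re * d i ≤ 0 := mul_nonpos_iff.2 (Or.inl ⟨h0, h⟩)
        _ ≤ max (d i) 0 := le_max_right _ _
  -- (6) the optimal projection
  set f : Fin n → ℂ := fun i => if 0 ≤ d i then 1 else 0 with hfdef
  set T₀ : Matrix (Fin n) (Fin n) ℂ := V * diagonal f * Vᴴ with hT₀def
  have hT₀herm : T₀.IsHermitian := by
    show T₀ᴴ = T₀
    have hstar : star f = f := by
      funext i
      simp [hfdef, apply_ite (star : ℂ → ℂ)]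
    rw [hT₀def, hconjT, hstar]
  have hT₀idem : T₀ * T₀ = T₀ := by
    have hff : f * f = f := by
      funext i
      by_cases h : 0 ≤ d i <;> simp [hfdef, h]
    rw [hT₀def, hmulConj, hff]
  -- commutation with P_E
  have hPED : P_E * D = D * P_E := by
    have h1 : P_E * (P_E * Δ * P_E) = P_E * Δ * P_E := by
      rw [← Matrix.mul_assoc, ← Matrix.mul_assoc, hPEi]
    have h2 : P_E * (P_O * Δ * P_O) = 0 := by
      rw [← Matrix.mul_assoc, ← Matrix.mul_assoc, hEO, Matrix.zero_mul, Matrix.zero_mul]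
    have h3 : P_E * Δ * P_E * P_E = P_E * Δ * P_E := by
      rw [Matrix.mul_assoc (P_E * Δ), hPEi]
    have h4 : P_O * Δ * P_O * P_E = 0 := by
      rw [Matrix.mul_assoc (P_O * Δ), hOE, Matrix.mul_zero]
    rw [hDdef, Matrix.mul_add, Matrix.add_mul, h1, h2, h3, h4]
  have hM : (Vᴴ * P_E * V) * diagonal c = diagonal c * (Vᴴ * P_E * V) := by
    have h := hPED
    rw [hspec] at h
    have e : Vᴴ * (P_E * (V * diagonal c * Vᴴ)) * V = (Vᴴ * P_E * V) * diagonal c * (Vᴴ * V) := by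
      simp only [Matrix.mul_assoc]
    have e' : Vᴴ * ((V * diagonal c * Vᴴ) * P_E) * V = (Vᴴ * V) * diagonal c * (Vᴴ * (P_E * V)) := by
      simp only [Matrix.mul_assoc]
    calc (Vᴴ * P_E * V) * diagonal c
        = (Vᴴ * P_E * V) * diagonal c * (Vᴴ * V) := by rw [hV1, Matrix.mul_one]
      _ = Vᴴ * (P_E * (V * diagonal c * Vᴴ)) * V := e.symm
      _ = Vᴴ * ((V * diagonal c * Vᴴ) * P_E) * V := by rw [h]
      _ = (Vᴴ * V) * diagonal c * (Vᴴ * (P_E * V)) := e'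
      _ = diagonal c * (Vᴴ * P_E * V) := by rw [hV1, Matrix.one_mul, Matrix.mul_assoc]
  have hMf : (Vᴴ * P_E * V) * diagonal f = diagonal f * (Vᴴ * P_E * V) := by
    refine comm_diagonal_fun _ c f (fun i j hij => ?_) hM
    have : d i = d j := Complex.ofReal_inj.mp hij
    simp [hfdef, this]
  have hcomm : T₀ * P_E = P_E * T₀ := by
    have e2 : T₀ * P_E = V * (diagonal f * (Vᴴ * P_E * V)) * Vᴴ := by
      calc T₀ * P_E = T₀ * P_E * (V * Vᴴ) := by rw [hV2, Matrix.mul_one]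
        _ = V * (diagonal f * (Vᴴ * P_E * V)) * Vᴴ := by
            rw [hT₀def]; simp only [Matrix.mul_assoc]
    have e3 : P_E * T₀ = V * ((Vᴴ * P_E * V) * diagonal f) * Vᴴ := by
      calc P_E * T₀ = (V * Vᴴ) * (P_E * T₀) := by rw [hV2, Matrix.one_mul]
        _ = V * ((Vᴴ * P_E * V) * diagonal f) * Vᴴ := by
            rw [hT₀def]; simp only [Matrix.mul_assoc]
    rw [e2, e3, hMf]
  have hcommO : T₀ * P_O = P_O * T₀ := by
    rw [hPOeq, Matrix.mul_sub, Matrix.sub_mul, Matrix.mul_one, Matrix.one_mul, hcomm]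
  have hbd : T₀ = P_E * T₀ * P_E + P_O * T₀ * P_O := by
    have h1 : P_E * T₀ * P_E = P_E * T₀ := by
      rw [Matrix.mul_assoc, ← hcomm, ← Matrix.mul_assoc, ← hcomm, Matrix.mul_assoc, hPEi,
        hcomm]
    have h2 : P_O * T₀ * P_O = P_O * T₀ := by
      rw [Matrix.mul_assoc, ← hcommO, ← Matrix.mul_assoc, ← hcommO, Matrix.mul_assoc, hPOi,
        hcommO]
    rw [h1, h2, ← Matrix.add_mul, hsum, Matrix.one_mul]
  -- value at T₀
  have hvalT₀ : ((T₀ * Δ).trace).re = (traceNorm D + Δ.trace.re) / 2 := by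
    rw [htr T₀ hbd, hval]
    have : (T₀ * D).trace = ∑ i, (f * c) i := by
      conv_lhs => rw [hspec]
      rw [hT₀def, hmulConj, htraceConj]
    rw [this, Complex.re_sum]
    refine Finset.sum_congr rfl fun i _ => ?_
    by_cases h : 0 ≤ d i
    · simp [hfdef, hcdef, h, max_eq_left h]
    · simp [hfdef, hcdef, h, max_eq_right (le_of_not_ge h)]
  -- T₀ is an effect
  have hT₀psd : T₀.PosSemidef := by
    rw [hT₀def]
    refine (Matrix.PosSemidef.diagonal ?_).mul_mul_conjTranspose_same V
    intro i
    simp only [hfdef]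
    split
    · exact zero_le_one
    · exact le_refl 0
  have h1T₀psd : (1 - T₀).PosSemidef := by
    have hone : (1 : Matrix (Fin n) (Fin n) ℂ) = V * diagonal (fun _ => (1:ℂ)) * Vᴴ := by
      rw [diagonal_one, Matrix.mul_one, hV2]
    have : 1 - T₀ = V * diagonal (fun i => 1 - f i) * Vᴴ := by
      rw [hT₀def]
      conv_lhs => rw [hone]
      rw [← Matrix.sub_mul, ← Matrix.mul_sub, Matrix.diagonal_sub]
    rw [this]
    refine (Matrix.PosSemidef.diagonal ?_).mul_mul_conjTranspose_same V
    intro i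
    simp only [hfdef]
    split
    · simp
    · simp [zero_le_one]
  refine ⟨⟨⟨T₀, ⟨hT₀psd, h1T₀psd⟩, hbd, hvalT₀.symm⟩, hub⟩,
    ⟨T₀, ⟨hT₀herm, hT₀idem⟩, hcomm, hbd, hvalT₀⟩⟩
end

section
/- Let H be a finite-dimensional complex inner product space and let P_E and P_O be orthogonal projections on H with P_E + P_O = 1. Let K := ℂ² ⊗ ℂ² with standard basis vectors e_i ⊗ e_j, and for a, b ∈ ℂ with |a|² = |b|² = ½ let ω := a (e₀ ⊗ e₀) + b (e₁ ⊗ e₁) ∈ K. On H ⊗ K define P'_E := P_E ⊗ |e₀⊗e₀⟩⟨e₀⊗e₀| + P_O ⊗ |e₁⊗e₁⟩⟨e₁⊗e₁| and P'_O := P_E ⊗ |e₁⊗e₁⟩⟨e₁⊗e₁| + P_O ⊗ |e₀⊗e₀⟩⟨e₀⊗e₀|. Then for all unit vectors ψ, φ ∈ H with ⟪ψ, φ⟫ = 0, the vectors ψ' := ψ ⊗ ω and φ' := φ ⊗ ω satisfy ⟪P'_E ψ', P'_E φ'⟫ = 0 and ⟪P'_O ψ', P'_O φ'⟫ = 0.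 -/
open Matrix
open scoped ComplexOrder Kronecker

/-- The standard basis vector `e_i ⊗ e_j` of `ℂ² ⊗ ℂ²`. -/
noncomputable def e2 (i j : Fin 2) : Fin 2 × Fin 2 → ℂ := fun p => if p = (i, j) then 1 else 0

/-- The tensor product `ψ ⊗ ω` of a vector of `H` with a vector of `K = ℂ² ⊗ ℂ²`. -/
noncomputable def tensorVec {m : Type*} (ψ : m → ℂ) (ω : Fin 2 × Fin 2 → ℂ) :
    m × (Fin 2 × Fin 2) → ℂ := fun p => ψ p.1 * ω p.2

section Aux
variable {m : Type*} [Fintype m]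

lemma cinner_add_left (x y z : m → ℂ) : cinner (x + y) z = cinner x z + cinner y z := by
  simp [cinner, star_add, add_dotProduct]

lemma cinner_add_right (x y z : m → ℂ) : cinner x (y + z) = cinner x y + cinner x z := by
  simp [cinner, dotProduct_add]

lemma cinner_smul_left (c : ℂ) (x y : m → ℂ) : cinner (c • x) y = star c * cinner x y := by
  simp [cinner, star_smul, smul_dotProduct, smul_eq_mul]

lemma cinner_smul_right (c : ℂ) (x y : m → ℂ) : cinner x (c • y) = c * cinner x y := by
  simp [cinner, dotProduct_smul, smul_eq_mul]

lemma cinner_mulVec_left [DecidableEq m] (P : Matrix m m ℂ) (x y : m → ℂ) :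
    cinner (P.mulVec x) y = cinner x (Pᴴ.mulVec y) := by
  simp [cinner, Matrix.star_mulVec, Matrix.dotProduct_mulVec]

lemma cinner_tensor (x x' : m → ℂ) (y y' : Fin 2 × Fin 2 → ℂ) :
    cinner (tensorVec x y) (tensorVec x' y') = cinner x x' * cinner y y' := by
  simp only [cinner, dotProduct, Pi.star_apply, tensorVec]
  rw [Finset.sum_mul_sum, Fintype.sum_prod_type]
  apply Finset.sum_congr rfl
  intro i _
  apply Finset.sum_congr rfl
  intro j _
  simp [star_mul']
  ring

lemma kron_mulVec (A : Matrix m m ℂ) (B : Matrix (Fin 2 × Fin 2) (Fin 2 × Fin 2) ℂ)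
    (x : m → ℂ) (y : Fin 2 × Fin 2 → ℂ) :
    (A ⊗ₖ B).mulVec (tensorVec x y) = tensorVec (A.mulVec x) (B.mulVec y) := by
  funext p
  simp only [Matrix.mulVec, dotProduct, tensorVec, Matrix.kroneckerMap_apply]
  rw [Finset.sum_mul_sum, Fintype.sum_prod_type]
  apply Finset.sum_congr rfl
  intro i _
  apply Finset.sum_congr rfl
  intro j _
  ring

lemma outer_mulVec (v y : m → ℂ) : (outer v).mulVec y = (cinner v y) • v := by
  funext i
  simp only [outer, cinner, Matrix.mulVec, dotProduct, Matrix.vecMulVec_apply, Pi.smul_apply,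
    Pi.star_apply, smul_eq_mul, Finset.sum_mul, Finset.mul_sum]
  apply Finset.sum_congr rfl
  intro j _
  ring

lemma cinner_e2 (i j k l : Fin 2) : cinner (e2 i j) (e2 k l) = if (i,j) = (k,l) then 1 else 0 := by
  simp only [cinner, e2, dotProduct, Pi.star_apply]
  rw [Fintype.sum_prod_type]
  fin_cases i <;> fin_cases j <;> fin_cases k <;> fin_cases l <;>
    simp [Fin.sum_univ_two, Prod.ext_iff]

end Aux

/-- **Theorem 2, sufficiency.** With a maximally entangled ancilla `ω = a|00⟩ + b|11⟩`,
`|a|² = |b|² = 1/2`, the `E` and `O` parts of `ψ ⊗ ω` and `φ ⊗ ω` are separately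
orthogonal for any two orthogonal unit vectors `ψ, φ`. -/
theorem maximally_entangled_ancilla_restores_orthogonality
    {n : ℕ} (P_E P_O : Matrix (Fin n) (Fin n) ℂ)
    (hPE : IsOrthoProj P_E) (hPO : IsOrthoProj P_O) (hsum : P_E + P_O = 1)
    (a b : ℂ) (ha : Complex.normSq a = 1 / 2) (hb : Complex.normSq b = 1 / 2)
    (ω : Fin 2 × Fin 2 → ℂ) (hω : ω = a • e2 0 0 + b • e2 1 1)
    (P'E P'O : Matrix (Fin n × (Fin 2 × Fin 2)) (Fin n × (Fin 2 × Fin 2)) ℂ)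
    (hP'E : P'E = P_E ⊗ₖ outer (e2 0 0) + P_O ⊗ₖ outer (e2 1 1))
    (hP'O : P'O = P_E ⊗ₖ outer (e2 1 1) + P_O ⊗ₖ outer (e2 0 0))
    (ψ φ : Fin n → ℂ) (hψ : cinner ψ ψ = 1) (hφ : cinner φ φ = 1)
    (horth : cinner ψ φ = 0) :
    cinner (P'E.mulVec (tensorVec ψ ω)) (P'E.mulVec (tensorVec φ ω)) = 0 ∧
    cinner (P'O.mulVec (tensorVec ψ ω)) (P'O.mulVec (tensorVec φ ω)) = 0 := by
  have haa : (starRingEnd ℂ) a * a = (1/2 : ℂ) := by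
    rw [← Complex.normSq_eq_conj_mul_self, ha]; norm_num
  have hbb : (starRingEnd ℂ) b * b = (1/2 : ℂ) := by
    rw [← Complex.normSq_eq_conj_mul_self, hb]; norm_num
  have key : ∀ (Q R : Matrix (Fin n) (Fin n) ℂ), IsOrthoProj Q → IsOrthoProj R → Q + R = 1 →
      cinner ((Q ⊗ₖ outer (e2 0 0) + R ⊗ₖ outer (e2 1 1)).mulVec (tensorVec ψ ω))
             ((Q ⊗ₖ outer (e2 0 0) + R ⊗ₖ outer (e2 1 1)).mulVec (tensorVec φ ω)) = 0 := by
    intro Q R hQ hR hQR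
    have hme : ∀ v : Fin n → ℂ,
        (Q ⊗ₖ outer (e2 0 0) + R ⊗ₖ outer (e2 1 1)).mulVec (tensorVec v ω)
        = tensorVec (Q.mulVec v) (a • e2 0 0) + tensorVec (R.mulVec v) (b • e2 1 1) := by
      intro v
      rw [Matrix.add_mulVec, kron_mulVec, kron_mulVec, outer_mulVec, outer_mulVec, hω]
      rw [cinner_add_right, cinner_add_right, cinner_smul_right, cinner_smul_right,
        cinner_smul_right, cinner_smul_right, cinner_e2, cinner_e2, cinner_e2, cinner_e2]
      norm_num
    have hQQ : cinner (Q.mulVec ψ) (Q.mulVec φ) = cinner ψ (Q.mulVec φ) := by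
      rw [cinner_mulVec_left, hQ.1, Matrix.mulVec_mulVec, hQ.2]
    have hRR : cinner (R.mulVec ψ) (R.mulVec φ) = cinner ψ (R.mulVec φ) := by
      rw [cinner_mulVec_left, hR.1, Matrix.mulVec_mulVec, hR.2]
    have h1 : cinner ψ (Q.mulVec φ) + cinner ψ (R.mulVec φ) = 0 := by
      rw [← cinner_add_right, ← Matrix.add_mulVec, hQR, Matrix.one_mulVec, horth]
    rw [hme ψ, hme φ, cinner_add_left, cinner_add_right, cinner_add_right,
      cinner_tensor, cinner_tensor, cinner_tensor, cinner_tensor, hQQ, hRR,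
      cinner_smul_left, cinner_smul_left, cinner_smul_left, cinner_smul_left,
      cinner_smul_right, cinner_smul_right, cinner_smul_right, cinner_smul_right,
      cinner_e2, cinner_e2, cinner_e2, cinner_e2]
    norm_num
    linear_combination cinner ψ (Q.mulVec φ) * haa + cinner ψ (R.mulVec φ) * hbb + (1/2) * h1
  constructor
  · rw [hP'E]; exact key P_E P_O hPE hPO hsum
  · rw [hP'O, add_comm]; exact key P_O P_E hPO hPE (by rw [add_comm]; exact hsum)
end
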